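/- Let a_1,...,a_n be real numbers with sum zero. Then the sum of their cubes satisfies |∑ a_i^3| ≤ ((n-2)/√(n(n-1))) · (∑ a_i^2)^(3/2). -/

import Mathlib

lemma key_sum_cubes (n : ℕ) (hn : 2 ≤ n) (a : Fin n → ℝ)
    (hsum : ∑ i, a i = 0) :
    ∑ i, (a i)^3 ≤ (((n : ℝ) - 2) / Real.sqrt (n * (n - 1))) *
      (∑ i, (a i)^2) ^ ((3 : ℝ) / 2) := by
  have hn2 : (2:ℝ) ≤ (n:ℝ) := by exact_mod_cast hn
  set N := (n:ℝ) with hN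
  set S := ∑ i, (a i)^2 with hS
  have hS0 : 0 ≤ S := Finset.sum_nonneg fun i _ => sq_nonneg _
  have hD : 0 < N * (N - 1) := by nlinarith
  have hsqD : 0 < Real.sqrt (N * (N - 1)) := Real.sqrt_pos.2 hD
  rcases eq_or_lt_of_le hS0 with h0 | hpos
  · have hz : ∀ i ∈ Finset.univ, (a i)^2 = 0 := by
      intro i _
      have := (Finset.sum_eq_zero_iff_of_nonneg (fun i _ => sq_nonneg (a i))).1 h0.symm
      exact this i (Finset.mem_univ i)
    have ha : ∀ i, a i = 0 := fun i => by
      have := hz i (Finset.mem_univ i); exact pow_eq_zero_iff (by norm_num) |>.1 this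
    have hL : ∑ i, (a i)^3 = 0 := by
      apply Finset.sum_eq_zero; intro i _; rw [ha i]; ring
    rw [hL, ← h0, Real.zero_rpow (by norm_num), mul_zero]
  · set x := Real.sqrt (S / (N * (N - 1))) with hx
    have hx0 : 0 < x := Real.sqrt_pos.2 (div_pos hpos hD)
    have hx2 : x^2 = S / (N * (N - 1)) := Real.sq_sqrt (le_of_lt (div_pos hpos hD))
    -- pointwise bound: a i ≤ (N-1)*x
    have hbound : ∀ i, a i ≤ (N - 1) * x := by
      intro i
      have hMpos : 0 < (N - 1) * x := by nlinarith
      have hsq : (a i)^2 ≤ ((N - 1) * x)^2 := by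
        have herase : ∑ j ∈ Finset.univ.erase i, a j = - a i := by
          have h := Finset.add_sum_erase Finset.univ a (Finset.mem_univ i)
          rw [hsum] at h; linarith
        have herase2 : ∑ j ∈ Finset.univ.erase i, (a j)^2 = S - (a i)^2 := by
          have h : (a i)^2 + ∑ j ∈ Finset.univ.erase i, (a j)^2 = S := by
            exact Finset.add_sum_erase Finset.univ (fun j => (a j)^2) (Finset.mem_univ i)
          linarith
        have hcs := sq_sum_le_card_mul_sum_sq (s := Finset.univ.erase i) (f := a)
        have hcard : ((Finset.univ.erase i).card : ℝ) = N - 1 := by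
          rw [Finset.card_erase_of_mem (Finset.mem_univ i)]
          simp [hN, Nat.cast_sub (by omega : 1 ≤ n)]
        rw [herase, herase2, hcard, neg_sq] at hcs
        have h1 : N * (a i)^2 ≤ (N - 1) * S := by nlinarith
        have h2 : ((N - 1) * x)^2 = (N - 1) * S / N := by
          rw [mul_pow, hx2]; field_simp
        rw [h2, le_div_iff₀ (by linarith : (0:ℝ) < N)]
        nlinarith
      calc a i ≤ |a i| := le_abs_self _
        _ = Real.sqrt ((a i)^2) := (Real.sqrt_sq_eq_abs _).symm
        _ ≤ Real.sqrt (((N - 1) * x)^2) := Real.sqrt_le_sqrt hsq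
        _ = (N - 1) * x := Real.sqrt_sq (le_of_lt hMpos)
    have hP : ∀ i, (a i)^3 ≤ (N - 3)*x*(a i)^2 + (2*N - 3)*x^2*(a i) + (N - 1)*x^3 := by
      intro i
      have h := mul_nonpos_of_nonneg_of_nonpos (sq_nonneg (a i + x))
        (sub_nonpos.2 (hbound i))
      nlinarith [h]
    have hsum3 : ∑ i, (a i)^3 ≤ (N - 3)*x*S + N*((N - 1)*x^3) := by
      calc ∑ i, (a i)^3
          ≤ ∑ i, ((N - 3)*x*(a i)^2 + (2*N - 3)*x^2*(a i) + (N - 1)*x^3) :=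
            Finset.sum_le_sum fun i _ => hP i
        _ = (N - 3)*x*S + (2*N - 3)*x^2*(∑ i, a i) + N*((N - 1)*x^3) := by
            rw [Finset.sum_add_distrib, Finset.sum_add_distrib, ← Finset.mul_sum,
              ← Finset.mul_sum, Finset.sum_const, Finset.card_univ, Fintype.card_fin,
              nsmul_eq_mul, ← hS]
        _ = (N - 3)*x*S + N*((N - 1)*x^3) := by rw [hsum]; ring
    have hx3 : N * ((N - 1) * x^3) = S * x := by
      have h : x^3 = x^2 * x := by ring
      rw [h, hx2]; field_simp [show N - 1 ≠ 0 by linarith]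
    have hrpow : S ^ ((3:ℝ)/2) = S * Real.sqrt S := by
      rw [show (3:ℝ)/2 = 1 + 1/2 by norm_num, Real.rpow_add hpos, Real.rpow_one,
        Real.sqrt_eq_rpow]
    have hxval : x = Real.sqrt S / Real.sqrt (N * (N - 1)) := by
      rw [hx, Real.sqrt_div hS0]
    have hfinal : (N - 3)*x*S + N*((N - 1)*x^3)
        = ((N - 2) / Real.sqrt (N * (N - 1))) * (S ^ ((3:ℝ)/2)) := by
      rw [hx3, hrpow, hxval]
      field_simp
      ring
    linarith [hsum3, le_of_eq hfinal]

theorem sum_cubes_bound (n : ℕ) (hn : 2 ≤ n) (a : Fin n → ℝ)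
    (hsum : ∑ i, a i = 0) :
    |∑ i, (a i)^3| ≤ (((n : ℝ) - 2) / Real.sqrt (n * (n - 1))) *
      (∑ i, (a i)^2) ^ ((3 : ℝ) / 2) := by
  rw [abs_le]
  constructor
  · have h := key_sum_cubes n hn (fun i => -a i) (by simp [hsum])
    have h3 : ∑ i, (-a i)^3 = -∑ i, (a i)^3 := by
      rw [← Finset.sum_neg_distrib]
      exact Finset.sum_congr rfl fun i _ => by ring
    have h2 : ∑ i, (-a i)^2 = ∑ i, (a i)^2 := by
      exact Finset.sum_congr rfl fun i _ => by ring
    simp only [h3, h2] at h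
    linarith
  · exact key_sum_cubes n hn a hsum
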